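/- Let r > 2/3 and u ∈ (6/5, 4/3) with r + u − 2 > 0. Then the algebraic system of two equations 2 + μ = (1/2)·√(2D(r + 1/10))·(q_{f,+}(r) − 2q_{f,−}(r)) and u + μ = −(1/2)·√(2D(r + 1/10))·(q_{b,+}(r,u) − 2q_{b,−}(r,u)) has exactly one solution (D, μ) with D > 0, namely D = D_0(r,u) and μ = μ_0(r,u). -/

import Mathlib

noncomputable section

/-- `q_{f,+}(r) = 1 + √(r/(r + 1/10))`. -/
def qfp (r : ℝ) : ℝ := 1 + Real.sqrt (r / (r + 1/10))

/-- `q_{f,−}(r) = 1 − √(r/(r + 1/10))`. -/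
def qfm (r : ℝ) : ℝ := 1 - Real.sqrt (r / (r + 1/10))

/-- `q_{b,+}(r,u) = 1 + √((r + u − 2)/(r + 1/10))`. -/
def qbp (r u : ℝ) : ℝ := 1 + Real.sqrt ((r + u - 2) / (r + 1/10))

/-- `q_{b,−}(r,u) = 1 − √((r + u − 2)/(r + 1/10))`. -/
def qbm (r u : ℝ) : ℝ := 1 - Real.sqrt ((r + u - 2) / (r + 1/10))

/-- The singular wave-speed parameter `μ_0(r,u)`. -/
def mu0 (r u : ℝ) : ℝ :=
  (2*(2*qbm r u - qbp r u) + u*(2*qfm r - qfp r)) /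
    (qbp r u - 2*qbm r u + qfp r - 2*qfm r)

/-- The singular diffusion coefficient `D_0(r,u)`. -/
def D0 (r u : ℝ) : ℝ :=
  2*(2 - u)^2 / ((r + 1/10) * (2*qbm r u - qbp r u + 2*qfm r - qfp r)^2)

theorem stmt8 (r u : ℝ) (hr : 2/3 < r) (hu : u ∈ Set.Ioo (6/5 : ℝ) (4/3))
    (hru : 0 < r + u - 2) :
    (0 < D0 r u ∧
     2 + mu0 r u = (1/2) * Real.sqrt (2 * D0 r u * (r + 1/10)) * (qfp r - 2*qfm r) ∧
     u + mu0 r u = -(1/2) * Real.sqrt (2 * D0 r u * (r + 1/10)) * (qbp r u - 2*qbm r u)) ∧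
    ∀ D μ : ℝ, 0 < D →
      2 + μ = (1/2) * Real.sqrt (2*D*(r + 1/10)) * (qfp r - 2*qfm r) →
      u + μ = -(1/2) * Real.sqrt (2*D*(r + 1/10)) * (qbp r u - 2*qbm r u) →
      D = D0 r u ∧ μ = mu0 r u := by
  obtain ⟨hu1, hu2⟩ := hu
  have h1 : (0:ℝ) < r + 1/10 := by linarith
  have hr0 : (0:ℝ) < r := by linarith
  have h2u : (0:ℝ) < 2 - u := by linarith
  set x := Real.sqrt (r / (r + 1/10)) with hxdef
  set y := Real.sqrt ((r + u - 2) / (r + 1/10)) with hydef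
  have hx2 : x ^ 2 = r / (r + 1/10) := Real.sq_sqrt (by positivity)
  have hy2 : y ^ 2 = (r + u - 2) / (r + 1/10) := Real.sq_sqrt (by positivity)
  have hx0 : 0 ≤ x := Real.sqrt_nonneg _
  have hy0 : 0 ≤ y := Real.sqrt_nonneg _
  have hx2' : x ^ 2 * (r + 1/10) = r := by
    rw [hx2]; field_simp
  have hx49 : (2/3:ℝ)^2 < x ^ 2 := by
    rw [hx2, lt_div_iff₀ h1]; nlinarith
  have hxgt : 2/3 < x := by nlinarith [hx49, hx0]
  have hS : 0 < 3*x + 3*y - 2 := by linarith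
  have hqf : qfp r - 2 * qfm r = 3*x - 1 := by
    simp only [qfp, qfm]; rw [← hxdef]; ring
  have hqb : qbp r u - 2 * qbm r u = 3*y - 1 := by
    simp only [qbp, qbm]; rw [← hydef]; ring
  have hD0 : D0 r u = 2*(2 - u)^2 / ((r + 1/10) * (3*x + 3*y - 2)^2) := by
    simp only [D0, qbp, qbm, qfp, qfm]; rw [← hxdef, ← hydef]; ring_nf
  have hmu0 : mu0 r u = (2*(1 - 3*y) + u*(1 - 3*x)) / (3*x + 3*y - 2) := by
    simp only [mu0, qbp, qbm, qfp, qfm]; rw [← hxdef, ← hydef]; ring_nf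
  have hDpos : 0 < D0 r u := by
    rw [hD0]
    exact div_pos (by positivity) (mul_pos h1 (pow_pos hS 2))
  have hsq : Real.sqrt (2 * D0 r u * (r + 1/10)) = 2*(2 - u) / (3*x + 3*y - 2) := by
    rw [hD0, show 2 * (2*(2 - u)^2 / ((r + 1/10) * (3*x + 3*y - 2)^2)) * (r + 1/10)
        = (2*(2 - u) / (3*x + 3*y - 2))^2 from by field_simp]
    exact Real.sqrt_sq (le_of_lt (div_pos (by linarith) hS))
  constructor
  · refine ⟨hDpos, ?_, ?_⟩
    · rw [hmu0, hsq, hqf]; linear_combination (-2) * mul_inv_cancel₀ hS.ne'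
    · rw [hmu0, hsq, hqb]; linear_combination (-u) * mul_inv_cancel₀ hS.ne'
  · intro D μ hD h2 h3
    rw [hqf] at h2
    rw [hqb] at h3
    set s := Real.sqrt (2*D*(r + 1/10)) with hsdef
    have hs2 : s ^ 2 = 2*D*(r + 1/10) := Real.sq_sqrt (by positivity)
    have hsub : s * (3*x + 3*y - 2) = 2*(2 - u) := by linear_combination 2*h3 - 2*h2
    constructor
    · rw [hD0, eq_div_iff (ne_of_gt (mul_pos h1 (pow_pos hS 2)))]
      have hkey : 2*D*(r + 1/10)*(3*x + 3*y - 2)^2 = 4*(2 - u)^2 := by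
        linear_combination (-(3*x + 3*y - 2)^2) * hs2
          + (s*(3*x + 3*y - 2) + 2*(2 - u)) * hsub
      linear_combination hkey / 2
    · rw [hmu0, eq_div_iff (ne_of_gt hS)]
      linear_combination (3*x + 3*y - 2) * h2 + (1/2)*(3*x - 1) * hsub
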